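/- If F : Z_p^k → Z_p^k is a 1-Lipschitz measure-preserving map, then F is a bijection of Z_p^k. -/

import Mathlib

open MeasureTheory

variable {p : ℕ}

/-- The `i`-th base-`p` digit of a `p`-adic integer. -/
noncomputable def padicDigit [Fact p.Prime] (x : ℤ_[p]) (i : ℕ) : ℕ :=
  (x.appr (i + 1) - x.appr i) / p ^ i

/-- Congruence modulo `p^n` on `ℤ_[p]`. -/
def CongMod [Fact p.Prime] (n : ℕ) (x y : ℤ_[p]) : Prop :=
  PadicInt.toZModPow n x = PadicInt.toZModPow n y

/-- Coordinatewise congruence modulo `p^n` on `ℤ_[p]^k`. -/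
def CongModVec [Fact p.Prime] {k : ℕ} (n : ℕ) (x y : Fin k → ℤ_[p]) : Prop :=
  ∀ i, CongMod n (x i) (y i)

/-- Coordinatewise reduction `ℤ_[p]^k → (ℤ/p^n ℤ)^k`. -/
noncomputable def redVec [Fact p.Prime] {k : ℕ} (n : ℕ) (x : Fin k → ℤ_[p]) : Fin k → ZMod (p ^ n) :=
  fun i => PadicInt.toZModPow n (x i)

/-- The digit-interleaving map `H_k : ℤ_[p]^k → ℤ_[p]`. -/
noncomputable def Hk [Fact p.Prime] (k : ℕ) (hk : 0 < k) (x : Fin k → ℤ_[p]) : ℤ_[p] :=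
  ∑' m : ℕ, (padicDigit (x ⟨m % k, Nat.mod_lt m hk⟩) (m / k) : ℤ_[p]) * (p : ℤ_[p]) ^ m

/-- `F` is transitive modulo `p^n`: the induced map on `(ℤ/p^n ℤ)^k` is a single cycle. -/
def IsTransitiveModVec [Fact p.Prime] {k : ℕ}
    (F : (Fin k → ℤ_[p]) → (Fin k → ℤ_[p])) (n : ℕ) : Prop :=
  ∀ x y : Fin k → ℤ_[p], ∃ j : ℕ, CongModVec n (F^[j] x) y

/-- `G` is transitive modulo `p^n`: the induced map on `ℤ/p^n ℤ` is a single cycle. -/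
def IsTransitiveModZ [Fact p.Prime] (G : ℤ_[p] → ℤ_[p]) (n : ℕ) : Prop :=
  ∀ x y : ℤ_[p], ∃ j : ℕ, CongMod n (G^[j] x) y

noncomputable instance [Fact p.Prime] : MeasurableSpace ℤ_[p] := borel _
instance [Fact p.Prime] : BorelSpace ℤ_[p] := ⟨rfl⟩

/-- The normalized Haar measure on `ℤ_[p]`. -/
noncomputable def haarZ [Fact p.Prime] : Measure ℤ_[p] :=
  Measure.addHaarMeasure (⊤ : TopologicalSpace.PositiveCompacts ℤ_[p])

/-- The normalized Haar measure on `ℤ_[p]^k`. -/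
noncomputable def haarZk [Fact p.Prime] (k : ℕ) : Measure (Fin k → ℤ_[p]) :=
  Measure.addHaarMeasure (⊤ : TopologicalSpace.PositiveCompacts (Fin k → ℤ_[p]))

set_option synthInstance.maxHeartbeats 1000000 in
instance [Fact p.Prime] {k : ℕ} : BorelSpace (Fin k → ℤ_[p]) := inferInstance

set_option synthInstance.maxHeartbeats 1000000 in
instance haarZk_isAddHaarMeasure [Fact p.Prime] {k : ℕ} :
    (haarZk (p := p) k).IsAddHaarMeasure :=
  Measure.isAddHaarMeasure_addHaarMeasure _

set_option maxHeartbeats 2000000 in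
set_option synthInstance.maxHeartbeats 1000000 in
theorem stmt8 [Fact p.Prime] {k : ℕ}
    (F : (Fin k → ℤ_[p]) → (Fin k → ℤ_[p])) (hF : LipschitzWith 1 F)
    (hmp : MeasurePreserving F (haarZk k) (haarZk k)) :
    Function.Bijective F := by
  set μ := haarZk (p := p) k with hμ
  have hball : ∀ (a b : Fin k → ℤ_[p]) (r : ℝ),
      μ (Metric.closedBall a r) = μ (Metric.closedBall b r) := by
    intro a b r
    have h1 : Metric.closedBall b r = (fun z => (a - b) + z) ⁻¹' Metric.closedBall a r := by
      ext z
      simp only [Set.mem_preimage, Metric.mem_closedBall, dist_eq_norm]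
      constructor <;> intro h <;> [skip; skip] <;>
        · convert h using 2; abel
    rw [h1, measure_preimage_add]
  constructor
  · -- injective
    intro x y hxy
    by_contra hne
    obtain ⟨i, hi⟩ := Function.ne_iff.mp hne
    have hd : (0 : ℝ) < dist (x i) (y i) := dist_pos.mpr hi
    set r : ℝ := dist (x i) (y i) / 3 with hr
    have hrpos : 0 < r := by positivity
    have hdisj : Disjoint (Metric.closedBall x r) (Metric.closedBall y r) := by
      apply Metric.closedBall_disjoint_closedBall
      have : dist (x i) (y i) ≤ dist x y := dist_le_pi_dist x y i
      linarith
    set B := Metric.closedBall (F x) r with hB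
    have hsub : Metric.closedBall x r ∪ Metric.closedBall y r ⊆ F ⁻¹' B := by
      rintro z (hz | hz)
      · exact Metric.mem_closedBall.mpr
          (le_trans (by simpa using hF.dist_le_mul z x) hz)
      · have : dist (F z) (F y) ≤ r := le_trans (by simpa using hF.dist_le_mul z y) hz
        simpa only [hB, hxy, Set.mem_preimage] using Metric.mem_closedBall.mpr this
    have hmeasx : MeasurableSet (Metric.closedBall x r) := Metric.isClosed_closedBall.measurableSet
    have hmeasy : MeasurableSet (Metric.closedBall y r) := Metric.isClosed_closedBall.measurableSet
    have hBmeas : MeasurableSet B := Metric.isClosed_closedBall.measurableSet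
    have hunion : μ (Metric.closedBall x r ∪ Metric.closedBall y r)
        = μ (Metric.closedBall x r) + μ (Metric.closedBall y r) :=
      measure_union hdisj hmeasy
    have h2 : μ (Metric.closedBall x r) + μ (Metric.closedBall y r) ≤ μ (F ⁻¹' B) := by
      rw [← hunion]; exact measure_mono hsub
    have hFB : μ (F ⁻¹' B) = μ B := hmp.measure_preimage hBmeas.nullMeasurableSet
    have hxB : μ (Metric.closedBall x r) = μ B := hball _ _ _
    have hyB : μ (Metric.closedBall y r) = μ B := hball _ _ _
    have hpos : 0 < μ B := by
      refine lt_of_lt_of_le ?_ (measure_mono Metric.ball_subset_closedBall)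
      exact Metric.isOpen_ball.measure_pos μ ⟨F x, Metric.mem_ball_self hrpos⟩
    have hfin : μ B ≠ ⊤ := measure_ne_top μ B
    rw [hxB, hyB, hFB] at h2
    exact absurd h2 (ENNReal.lt_add_right hfin hpos.ne').not_ge
  · -- surjective
    have hcomp : IsCompact (Set.range F) := isCompact_range hF.continuous
    have hclosed : IsClosed (Set.range F) := hcomp.isClosed
    have hmeas : MeasurableSet (Set.range F) := hclosed.measurableSet
    have h1 : μ (Set.range F) = μ Set.univ := by
      rw [← hmp.measure_preimage hmeas.nullMeasurableSet]
      congr 1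
      exact Set.eq_univ_of_forall fun z => Set.mem_range_self z
    have h0 : μ (Set.range F)ᶜ = 0 := by
      rw [measure_compl hmeas (measure_ne_top μ _), h1, tsub_self]
    by_contra hns
    obtain ⟨y, hy⟩ := not_forall.mp hns
    have hyc : y ∈ (Set.range F)ᶜ := by
      simp only [Set.mem_compl_iff, Set.mem_range]
      exact fun ⟨x, hx⟩ => hy ⟨x, hx⟩
    have hopen : IsOpen (Set.range F)ᶜ := hclosed.isOpen_compl
    exact absurd h0 (hopen.measure_pos μ ⟨y, hyc⟩).ne'
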